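/- Let X be a standardized 3-Dirac mixture with ordered locations μ_1 < μ_2 < μ_3, probabilities ε_1, ε_2, ε_3 > 0 summing to 1, let s* denote the smallest minimizer of s ↦ Var|X − s|, and set α_2 = ε_1μ_1 + ε_2μ_2, η_2 = ε_1 + ε_2, and s_2 = (α_2/2)(1/η_2 − 1/(1−η_2)). Then (s* ∈ [μ_1, μ_2] and s_2 < μ_2) holds if and only if μ_1 < −((2ε_2 + 4ε_1ε_3)/√(4ε_1ε_3(ε_2 + 4ε_1ε_3)))·√(ε_3/(1−ε_3)). -/

import Mathlib

open MeasureTheory ProbabilityTheory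

theorem int_dirac3 (ε₁ ε₂ ε₃ μ₁ μ₂ μ₃ : ℝ) (hε₁ : 0 ≤ ε₁) (hε₂ : 0 ≤ ε₂) (hε₃ : 0 ≤ ε₃)
    (f : ℝ → ℝ) :
    ∫ x, f x ∂(ENNReal.ofReal ε₁ • Measure.dirac μ₁ + ENNReal.ofReal ε₂ • Measure.dirac μ₂ +
      ENNReal.ofReal ε₃ • Measure.dirac μ₃) = ε₁ * f μ₁ + ε₂ * f μ₂ + ε₃ * f μ₃ := by
  have hd : ∀ a : ℝ, Integrable f (Measure.dirac a) := by
    intro a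
    exact (integrable_congr (ae_eq_dirac f)).2 (integrable_const _)
  have hi : ∀ (c a : ℝ), Integrable f (ENNReal.ofReal c • Measure.dirac a) :=
    fun c a => (hd a).smul_measure ENNReal.ofReal_ne_top
  rw [integral_add_measure (((hi ε₁ μ₁).add_measure (hi ε₂ μ₂))) (hi ε₃ μ₃),
    integral_add_measure (hi ε₁ μ₁) (hi ε₂ μ₂)]
  simp [integral_smul_measure, integral_dirac, ENNReal.toReal_ofReal, hε₁, hε₂, hε₃]

theorem prob3 (ε₁ ε₂ ε₃ μ₁ μ₂ μ₃ : ℝ) (hε₁ : 0 ≤ ε₁) (hε₂ : 0 ≤ ε₂) (hε₃ : 0 ≤ ε₃)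
    (hsum : ε₁ + ε₂ + ε₃ = 1) :
    IsProbabilityMeasure (ENNReal.ofReal ε₁ • Measure.dirac μ₁ +
      ENNReal.ofReal ε₂ • Measure.dirac μ₂ + ENNReal.ofReal ε₃ • Measure.dirac (μ₃:ℝ)) := by
  constructor
  simp [Measure.add_apply, Measure.smul_apply, Measure.dirac_apply_of_mem,
    ← ENNReal.ofReal_add, hε₁, hε₂, hε₃, hsum]
  rw [← ENNReal.ofReal_add (by linarith) hε₃, hsum, ENNReal.ofReal_one]

theorem ae_mem3 (ε₁ ε₂ ε₃ μ₁ μ₂ μ₃ : ℝ) :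
    ∀ᵐ x ∂(ENNReal.ofReal ε₁ • Measure.dirac μ₁ + ENNReal.ofReal ε₂ • Measure.dirac μ₂ +
      ENNReal.ofReal ε₃ • Measure.dirac (μ₃:ℝ)), x = μ₁ ∨ x = μ₂ ∨ x = μ₃ := by
  rw [ae_iff]
  simp [Measure.add_apply, Measure.smul_apply]

theorem var_formula (ε₁ ε₂ ε₃ μ₁ μ₂ μ₃ : ℝ) (hε₁ : 0 ≤ ε₁) (hε₂ : 0 ≤ ε₂) (hε₃ : 0 ≤ ε₃)
    (hsum : ε₁ + ε₂ + ε₃ = 1) (s : ℝ) :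
    variance (fun x => |x - s|) (ENNReal.ofReal ε₁ • Measure.dirac μ₁ +
      ENNReal.ofReal ε₂ • Measure.dirac μ₂ + ENNReal.ofReal ε₃ • Measure.dirac μ₃) =
      (ε₁ * (μ₁ - s)^2 + ε₂ * (μ₂ - s)^2 + ε₃ * (μ₃ - s)^2)
        - (ε₁ * |μ₁ - s| + ε₂ * |μ₂ - s| + ε₃ * |μ₃ - s|)^2 := by
  set P := ENNReal.ofReal ε₁ • Measure.dirac μ₁ + ENNReal.ofReal ε₂ • Measure.dirac μ₂ +
      ENNReal.ofReal ε₃ • Measure.dirac μ₃ with hPdef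
  haveI : IsProbabilityMeasure P := prob3 ε₁ ε₂ ε₃ μ₁ μ₂ μ₃ hε₁ hε₂ hε₃ hsum
  have hmem : MemLp (fun x => |x - s|) 2 P := by
    refine MemLp.of_bound ((continuous_abs.comp
      (continuous_id.sub continuous_const)).aestronglyMeasurable)
      (|μ₁ - s| + |μ₂ - s| + |μ₃ - s|) ?_
    filter_upwards [ae_mem3 ε₁ ε₂ ε₃ μ₁ μ₂ μ₃] with x hx
    rcases hx with h | h | h <;> rw [h] <;>
      simp [Real.norm_eq_abs, abs_abs] <;>
      [skip;skip;skip] <;>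
      nlinarith [abs_nonneg (μ₁ - s), abs_nonneg (μ₂ - s), abs_nonneg (μ₃ - s)]
  rw [variance_eq_sub hmem]
  have h1 : (fun x : ℝ => |x - s| ^ 2) = fun x : ℝ => (x - s)^2 := by
    funext x; rw [sq_abs]
  have e1 : ∫ x, (|x - s|)^2 ∂P = ε₁ * (μ₁-s)^2 + ε₂ * (μ₂-s)^2 + ε₃ * (μ₃-s)^2 := by
    rw [show (fun x : ℝ => |x - s| ^ 2) = fun x : ℝ => (x - s)^2 from h1]
    exact int_dirac3 ε₁ ε₂ ε₃ μ₁ μ₂ μ₃ hε₁ hε₂ hε₃ (fun x => (x - s)^2)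
  have e2 : ∫ x, |x - s| ∂P = ε₁ * |μ₁-s| + ε₂ * |μ₂-s| + ε₃ * |μ₃-s| :=
    int_dirac3 ε₁ ε₂ ε₃ μ₁ μ₂ μ₃ hε₁ hε₂ hε₃ (fun x => |x - s|)
  simp only [Pi.pow_apply]
  rw [e1, e2]

theorem stepA (ε₁ ε₂ ε₃ μ₁ μ₂ μ₃ : ℝ)
    (hε₁ : 0 < ε₁) (hε₂ : 0 < ε₂) (hε₃ : 0 < ε₃) (hsum : ε₁ + ε₂ + ε₃ = 1)
    (h12 : μ₁ < μ₂) (h23 : μ₂ < μ₃)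
    (m0 : ε₁*μ₁ + ε₂*μ₂ + ε₃*μ₃ = 0) (m1 : ε₁*μ₁^2 + ε₂*μ₂^2 + ε₃*μ₃^2 = 1)
    (hμ₁neg : μ₁ < 0)
    (α₂ η₂ s₂ : ℝ)
    (hα₂ : α₂ = ε₁ * μ₁ + ε₂ * μ₂) (hη₂ : η₂ = ε₁ + ε₂)
    (hs₂ : s₂ = α₂ / 2 * (1 / η₂ - 1 / (1 - η₂))) :
    s₂ < μ₂ ↔
      μ₁ < -((2 * ε₂ + 4 * ε₁ * ε₃) / Real.sqrt (4 * ε₁ * ε₃ * (ε₂ + 4 * ε₁ * ε₃))) *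
        Real.sqrt (ε₃ / (1 - ε₃)) := by
  have hA : 0 < ε₁ + ε₂ := by linarith
  set K := ε₂ + 2*ε₁*ε₃ with hK
  have hKpos : 0 < K := by rw [hK]; positivity
  have hs₂' : s₂ = (α₂ * (ε₃ - (ε₁+ε₂))) / (2 * (ε₁+ε₂) * ε₃) := by
    rw [hs₂, hη₂, show (1:ℝ) - (ε₁+ε₂) = ε₃ by linarith]
    have h1 : (ε₁+ε₂) ≠ 0 := ne_of_gt hA
    have h2 : ε₃ ≠ 0 := ne_of_gt hε₃
    field_simp
  have step1 : s₂ < μ₂ ↔ (μ₃ - μ₂) * K < -(ε₁*μ₁) := by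
    rw [hs₂', div_lt_iff₀ (by positivity), hα₂]
    have hid : (μ₂ * (2 * (ε₁+ε₂) * ε₃) - (ε₁*μ₁ + ε₂*μ₂) * (ε₃ - (ε₁+ε₂)))
        * ((1-ε₁) * K)
        = (-(ε₁*μ₁) - (μ₃ - μ₂) * K) * (ε₃ * (2*(ε₁+ε₂)*ε₃ + ε₂*((ε₁+ε₂) - ε₃))) := by
      rw [hK]
      linear_combination
        (ε₂^2*ε₃ + ε₂^3 + 2*ε₁*ε₂*ε₃ + 2*ε₁*ε₂*ε₃^2 + ε₁*ε₂^2 + 2*ε₁*ε₂^2*ε₃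
          + 4*ε₁^2*ε₃^2 + 2*ε₁^2*ε₂*ε₃) * m0
        + (-ε₂^2*ε₃*μ₂ - ε₂^3*μ₂ - 2*ε₁*ε₂*ε₃*μ₂ + ε₁*ε₂*ε₃*μ₁ - 2*ε₁*ε₂*ε₃^2*μ₂
          - ε₁*ε₂^2*μ₂ - ε₁*ε₂^2*μ₁ - 2*ε₁*ε₂^2*ε₃*μ₂ - 4*ε₁^2*ε₃^2*μ₂ - ε₁^2*ε₂*μ₁
          - 2*ε₁^2*ε₂*ε₃*μ₂ - 2*ε₁^3*ε₃*μ₁ - 2*ε₁^2*ε₂*ε₃*μ₁) * hsum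
    have hB : 0 < ε₃ * (2*(ε₁+ε₂)*ε₃ + ε₂*((ε₁+ε₂) - ε₃)) := by
      have h0 : 0 < 2*(ε₁+ε₂)*ε₃ + ε₂*((ε₁+ε₂) - ε₃) := by
        nlinarith [mul_pos hε₃ hε₁, mul_pos hε₃ hε₂, mul_pos hε₂ hA]
      positivity
    have hA' : 0 < (1-ε₁) * K := mul_pos (by linarith) hKpos
    constructor
    · intro h
      have hXB : 0 < (-(ε₁*μ₁) - (μ₃ - μ₂) * K) * (ε₃ * (2*(ε₁+ε₂)*ε₃ + ε₂*((ε₁+ε₂) - ε₃))) := by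
        rw [← hid]; exact mul_pos (sub_pos.2 h) hA'
      rcases mul_pos_iff.1 hXB with ⟨h1, _⟩ | ⟨_, h2⟩
      · linarith
      · linarith
    · intro h
      have hXB : 0 < (μ₂ * (2 * (ε₁+ε₂) * ε₃) - (ε₁*μ₁ + ε₂*μ₂) * (ε₃ - (ε₁+ε₂))) * ((1-ε₁) * K) := by
        rw [hid]; exact mul_pos (by linarith) hB
      rcases mul_pos_iff.1 hXB with ⟨h1, _⟩ | ⟨_, h2⟩
      · linarith
      · linarith
  rw [step1]
  have hkey2 : K^2*((ε₂+ε₃)*(1-ε₁*μ₁^2) - (ε₁*μ₁)^2) = (ε₂*ε₃)*((μ₃-μ₂)*K)^2 := by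
    linear_combination (-(K^2*(ε₂+ε₃)))*m1 + (-(K^2*(ε₁*μ₁ - ε₂*μ₂ - ε₃*μ₃)))*m0
  have hS : 0 < ε₂ + ε₃ := by linarith
  have hMK : 0 ≤ (μ₃ - μ₂) * K := le_of_lt (mul_pos (by linarith) hKpos)
  have e2' : μ₁^2*ε₁*K^2*(ε₁+ε₂+ε₃) = μ₁^2*ε₁*K^2 := by
    linear_combination (μ₁^2*ε₁*K^2) * hsum
  have hid2 : ε₁*ε₂*ε₃ + K^2 = (1-ε₁)*((ε₂+4*ε₁*ε₃)*(ε₁+ε₂)) := by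
    rw [hK]; linear_combination (ε₁*ε₂ + 4*ε₁^2*ε₃) * hsum
  have e1' : (ε₂+ε₃)*(μ₁^2*(ε₁*((ε₂+4*ε₁*ε₃)*(ε₁+ε₂))))
      = μ₁^2*ε₁*(ε₁*ε₂*ε₃ + K^2) := by
    linear_combination (μ₁^2*ε₁*((ε₂+4*ε₁*ε₃)*(ε₁+ε₂))) * hsum + (μ₁^2*ε₁) * hid2
      + (-(2*μ₁^2*ε₁^2*(ε₂+4*ε₁*ε₃))) * hsum
  have hεμpos : 0 < -(ε₁*μ₁) := by nlinarith [mul_pos hε₁ (neg_pos.2 hμ₁neg)]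
  have step2 : (μ₃ - μ₂) * K < -(ε₁*μ₁) ↔ K^2 < μ₁^2 * (ε₁*((ε₂+4*ε₁*ε₃)*(ε₁+ε₂))) := by
    constructor
    · intro h
      have hsq : ((μ₃ - μ₂)*K)^2 < (ε₁*μ₁)^2 := by
        have := pow_lt_pow_left₀ h hMK two_ne_zero
        rwa [neg_pow, show (-1:ℝ)^2 = 1 by norm_num, one_mul] at this
      have h2 : K^2*((ε₂+ε₃)*(1-ε₁*μ₁^2) - (ε₁*μ₁)^2) < (ε₂*ε₃)*(ε₁*μ₁)^2 := by
        have := mul_lt_mul_of_pos_left hsq (mul_pos hε₂ hε₃)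
        linarith [hkey2, this]
      have h3 : (ε₂+ε₃) * K^2 < (ε₂+ε₃)*(μ₁^2 * (ε₁*((ε₂+4*ε₁*ε₃)*(ε₁+ε₂)))) := by
        linarith [h2, e1', e2']
      exact (mul_lt_mul_iff_right₀ hS).1 h3
    · intro h
      have h3 : (ε₂+ε₃) * K^2 < (ε₂+ε₃)*(μ₁^2 * (ε₁*((ε₂+4*ε₁*ε₃)*(ε₁+ε₂)))) :=
        (mul_lt_mul_iff_right₀ hS).2 h
      have h2 : K^2*((ε₂+ε₃)*(1-ε₁*μ₁^2) - (ε₁*μ₁)^2) < (ε₂*ε₃)*(ε₁*μ₁)^2 := by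
        linarith [h3, e1', e2']
      have hsq : ((ε₂*ε₃))*((μ₃ - μ₂)*K)^2 < ((ε₂*ε₃))*(-(ε₁*μ₁))^2 := by
        have : (-(ε₁*μ₁))^2 = (ε₁*μ₁)^2 := by ring
        rw [this]
        linarith [h2, hkey2]
      have hsq2 : ((μ₃ - μ₂)*K)^2 < (-(ε₁*μ₁))^2 :=
        (mul_lt_mul_iff_right₀ (mul_pos hε₂ hε₃)).1 hsq
      exact lt_of_pow_lt_pow_left₀ 2 (le_of_lt hεμpos) hsq2
  rw [step2]
  -- Step 3: sqrt manipulation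
  have h1mε₃ : 1 - ε₃ = ε₁ + ε₂ := by linarith
  set u := Real.sqrt (4 * ε₁ * ε₃ * (ε₂ + 4 * ε₁ * ε₃)) with hu
  set v := Real.sqrt (ε₃ / (1 - ε₃)) with hv
  have hupos : 0 < u := Real.sqrt_pos.2 (by positivity)
  have hvpos : 0 < v := Real.sqrt_pos.2 (by rw [h1mε₃]; positivity)
  have hu2 : u^2 = 4 * ε₁ * ε₃ * (ε₂ + 4 * ε₁ * ε₃) := Real.sq_sqrt (by positivity)
  have hv2 : v^2 = ε₃ / (ε₁ + ε₂) := by rw [hv, h1mε₃]; exact Real.sq_sqrt (by positivity)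
  set T := (2 * ε₂ + 4 * ε₁ * ε₃) / u * v with hT
  have hTpos : 0 < T := by positivity
  have hkpos : 0 < ε₁*((ε₂+4*ε₁*ε₃)*(ε₁+ε₂)) := by positivity
  have hT2 : T^2 * (ε₁*((ε₂+4*ε₁*ε₃)*(ε₁+ε₂))) = K^2 := by
    rw [hT, mul_pow, div_pow, hu2, hv2, hK]
    have h1 : (ε₁+ε₂) ≠ 0 := ne_of_gt hA
    have h2 : (4 * ε₁ * ε₃ * (ε₂ + 4 * ε₁ * ε₃)) ≠ 0 := by positivity
    field_simp
    ring
  have hTg : -((2 * ε₂ + 4 * ε₁ * ε₃) / Real.sqrt (4 * ε₁ * ε₃ * (ε₂ + 4 * ε₁ * ε₃))) *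
      Real.sqrt (ε₃ / (1 - ε₃)) = -T := by rw [hT, ← hu, ← hv]; ring
  rw [hTg]
  constructor
  · intro h
    have h4 : T^2 * (ε₁*((ε₂+4*ε₁*ε₃)*(ε₁+ε₂))) < μ₁^2 * (ε₁*((ε₂+4*ε₁*ε₃)*(ε₁+ε₂))) := by
      rw [hT2]; exact h
    have hμ2T : T^2 < μ₁^2 := (mul_lt_mul_iff_left₀ hkpos).1 h4
    have : T < -μ₁ := by
      have hμ2T' : T^2 < (-μ₁)^2 := by
        have e : (-μ₁)^2 = μ₁^2 := by ring
        rw [e]; exact hμ2T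
      exact lt_of_pow_lt_pow_left₀ 2 (by linarith) hμ2T'
    linarith
  · intro h
    have hTμ : T < -μ₁ := by linarith
    have hμ2T : T^2 < μ₁^2 := by
      have := pow_lt_pow_left₀ hTμ (le_of_lt hTpos) two_ne_zero
      rwa [neg_pow, show (-1:ℝ)^2 = 1 by norm_num, one_mul] at this
    have h4 := mul_lt_mul_of_pos_right hμ2T hkpos
    rw [hT2] at h4
    linarith [h4]

set_option maxHeartbeats 1000000 in
theorem stepB (ε₁ ε₂ ε₃ μ₁ μ₂ μ₃ sstar : ℝ)
    (hε₁ : 0 < ε₁) (hε₂ : 0 < ε₂) (hε₃ : 0 < ε₃) (hsum : ε₁ + ε₂ + ε₃ = 1)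
    (h12 : μ₁ < μ₂) (h23 : μ₂ < μ₃)
    (m0 : ε₁*μ₁ + ε₂*μ₂ + ε₃*μ₃ = 0) (m1 : ε₁*μ₁^2 + ε₂*μ₂^2 + ε₃*μ₃^2 = 1)
    (hμ₁neg : μ₁ < 0)
    (F : ℝ → ℝ)
    (hF : ∀ s, F s = (ε₁*(μ₁-s)^2 + ε₂*(μ₂-s)^2 + ε₃*(μ₃-s)^2)
      - (ε₁*|μ₁-s| + ε₂*|μ₂-s| + ε₃*|μ₃-s|)^2)
    (hmin : ∀ s, F sstar ≤ F s)
    (hleast : ∀ t, (∀ s, F t ≤ F s) → sstar ≤ t)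
    (hC : (ε₁*μ₁ + ε₂*μ₂) * (ε₃ - (ε₁+ε₂)) < μ₂ * (2 * (ε₁+ε₂) * ε₃)) :
    μ₁ ≤ sstar ∧ sstar ≤ μ₂ := by
  have h1ε : 0 < 1 - ε₁ := by linarith
  -- piecewise formulas
  set q₁ : ℝ → ℝ := fun s => 1 + s^2 - ((2*ε₁-1)*s - 2*ε₁*μ₁)^2 with hq₁def
  set q₂ : ℝ → ℝ := fun s => 1 + s^2 - ((2*(ε₁+ε₂)-1)*s - 2*(ε₁*μ₁+ε₂*μ₂))^2 with hq₂def
  have hFlow : ∀ s, s ≤ μ₁ → F s = 1 := by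
    intro s hs
    rw [hF s, abs_of_nonneg (by linarith : (0:ℝ) ≤ μ₁ - s),
      abs_of_nonneg (by linarith : (0:ℝ) ≤ μ₂ - s), abs_of_nonneg (by linarith : (0:ℝ) ≤ μ₃ - s)]
    linear_combination m1 + (-2*s - ((ε₁*(μ₁-s)+ε₂*(μ₂-s)+ε₃*(μ₃-s)) - s))*m0
      + (s^2 + s*((ε₁*(μ₁-s)+ε₂*(μ₂-s)+ε₃*(μ₃-s)) - s))*hsum
  have hFhigh : ∀ s, μ₃ ≤ s → F s = 1 := by
    intro s hs
    rw [hF s, abs_of_nonpos (by linarith : μ₁ - s ≤ 0),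
      abs_of_nonpos (by linarith : μ₂ - s ≤ 0), abs_of_nonpos (by linarith : μ₃ - s ≤ 0)]
    linear_combination m1 + (-2*s + ((ε₁*(s-μ₁)+ε₂*(s-μ₂)+ε₃*(s-μ₃)) + s))*m0
      + (s^2 - s*((ε₁*(s-μ₁)+ε₂*(s-μ₂)+ε₃*(s-μ₃)) + s))*hsum
  have hFmid : ∀ s, μ₁ ≤ s → s ≤ μ₂ → F s = q₁ s := by
    intro s hs1 hs2
    rw [hF s, abs_of_nonpos (by linarith : μ₁ - s ≤ 0),
      abs_of_nonneg (by linarith : (0:ℝ) ≤ μ₂ - s), abs_of_nonneg (by linarith : (0:ℝ) ≤ μ₃ - s)]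
    show _ = 1 + s^2 - ((2*ε₁-1)*s - 2*ε₁*μ₁)^2
    linear_combination m1
      + (-2*s - ((ε₁*(s-μ₁)+ε₂*(μ₂-s)+ε₃*(μ₃-s)) + ((2*ε₁-1)*s - 2*ε₁*μ₁)))*m0
      + (s^2 + s*((ε₁*(s-μ₁)+ε₂*(μ₂-s)+ε₃*(μ₃-s)) + ((2*ε₁-1)*s - 2*ε₁*μ₁)))*hsum
  have hFright : ∀ s, μ₂ ≤ s → s ≤ μ₃ → F s = q₂ s := by
    intro s hs1 hs2
    rw [hF s, abs_of_nonpos (by linarith : μ₁ - s ≤ 0),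
      abs_of_nonpos (by linarith : μ₂ - s ≤ 0), abs_of_nonneg (by linarith : (0:ℝ) ≤ μ₃ - s)]
    show _ = 1 + s^2 - ((2*(ε₁+ε₂)-1)*s - 2*(ε₁*μ₁+ε₂*μ₂))^2
    linear_combination m1
      + (-2*s - ((ε₁*(s-μ₁)+ε₂*(s-μ₂)+ε₃*(μ₃-s)) + ((2*(ε₁+ε₂)-1)*s - 2*(ε₁*μ₁+ε₂*μ₂))))*m0
      + (s^2 + s*((ε₁*(s-μ₁)+ε₂*(s-μ₂)+ε₃*(μ₃-s)) + ((2*(ε₁+ε₂)-1)*s - 2*(ε₁*μ₁+ε₂*μ₂))))*hsum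
  -- difference identities
  have hql : ∀ x y : ℝ, q₁ x - q₁ y = 4*ε₁*(x-y)*((1-ε₁)*(x+y) - (1-2*ε₁)*μ₁) := by
    intro x y; show (1 + x^2 - _) - _ = _; ring
  have hq2d : ∀ x y : ℝ, q₂ x - q₂ y
      = 4*(x-y)*((ε₁+ε₂)*(1-ε₁-ε₂)*(x+y) + (2*(ε₁+ε₂)-1)*(ε₁*μ₁+ε₂*μ₂)) := by
    intro x y; show (1 + x^2 - _) - _ = _; ring
  have hq₁μ₁ : q₁ μ₁ = 1 := by show 1 + μ₁^2 - _ = 1; ring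
  have hq₁₂μ₂ : q₁ μ₂ = q₂ μ₂ := by show 1 + μ₂^2 - _ = 1 + μ₂^2 - _; ring
  -- vertex s1
  set s1 : ℝ := μ₁*(1-2*ε₁)/(2*(1-ε₁)) with hs1def
  have hs1d : 2*(1-ε₁)*s1 = μ₁*(1-2*ε₁) := by
    rw [hs1def]; field_simp
  have hs1gt : μ₁ < s1 := by
    have h2p : (0:ℝ) < 2*(1-ε₁) := by linarith
    have h' : 2*(1-ε₁)*μ₁ < 2*(1-ε₁)*s1 := by rw [hs1d]; nlinarith [hμ₁neg]
    exact (mul_lt_mul_iff_right₀ h2p).1 h'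
  set c : ℝ := min s1 μ₂ with hcdef
  have hc1 : μ₁ < c := lt_min hs1gt h12
  have hc2 : c ≤ μ₂ := min_le_right _ _
  have hcs1 : c ≤ s1 := min_le_left _ _
  -- P1 : q₁ c ≤ q₁ s on [μ₁, μ₂]
  have P1 : ∀ s, μ₁ ≤ s → s ≤ μ₂ → q₁ c ≤ q₁ s := by
    intro s hs1' hs2'
    rcases le_total s1 μ₂ with hcase | hcase
    · have hceq : c = s1 := min_eq_left hcase
      rw [hceq]
      have key : q₁ s - q₁ s1 = 4*ε₁*(1-ε₁)*(s-s1)^2 := by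
        rw [hql s s1]
        linear_combination (4*ε₁*(s-s1))*hs1d
      have h4 : 0 ≤ 4*ε₁*(1-ε₁)*(s-s1)^2 := by positivity
      linarith [key, h4]
    · have hceq : c = μ₂ := min_eq_right hcase
      rw [hceq]
      have key := hql s μ₂
      have hbr : (1-ε₁)*(s+μ₂) - (1-2*ε₁)*μ₁ ≤ 0 := by
        have ha : (1-ε₁)*s ≤ (1-ε₁)*s1 :=
          mul_le_mul_of_nonneg_left (hs2'.trans hcase) (le_of_lt h1ε)
        have hb : (1-ε₁)*μ₂ ≤ (1-ε₁)*s1 := mul_le_mul_of_nonneg_left hcase (le_of_lt h1ε)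
        nlinarith [hs1d, ha, hb]
      have hprod : 0 ≤ (μ₂ - s) * (-((1-ε₁)*(s+μ₂) - (1-2*ε₁)*μ₁)) :=
        mul_nonneg (by linarith) (by linarith)
      have h4 : 0 ≤ 4*ε₁*((μ₂ - s) * (-((1-ε₁)*(s+μ₂) - (1-2*ε₁)*μ₁))) :=
        mul_nonneg (by positivity) hprod
      linarith [key, h4]
  -- P3 : q₁ c < 1
  have P3 : q₁ c < 1 := by
    have key := hql μ₁ c
    have hbr : (1-ε₁)*(μ₁+c) - (1-2*ε₁)*μ₁ < 0 := by
      have := mul_lt_mul_of_pos_left (show μ₁ + c < s1 + s1 by linarith) h1ε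
      nlinarith [hs1d, this]
    have hprod : 0 < (c - μ₁) * (-((1-ε₁)*(μ₁+c) - (1-2*ε₁)*μ₁)) :=
      mul_pos (by linarith) (by linarith)
    have h4 : 0 < 4*ε₁*((c - μ₁) * (-((1-ε₁)*(μ₁+c) - (1-2*ε₁)*μ₁))) :=
      mul_pos (by positivity) hprod
    linarith [key, h4, hq₁μ₁]
  -- P4 : q₂ μ₂ ≤ q₂ s for s ≥ μ₂
  have P4 : ∀ s, μ₂ ≤ s → q₂ μ₂ ≤ q₂ s := by
    intro s hs
    have key := hq2d s μ₂
    have he₃ : ε₃ = 1 - ε₁ - ε₂ := by linarith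
    rw [he₃] at hC
    have hbr : 0 < (ε₁+ε₂)*(1-ε₁-ε₂)*(μ₂+μ₂) + (2*(ε₁+ε₂)-1)*(ε₁*μ₁+ε₂*μ₂) := by
      linarith [hC]
    have hbr2 : 0 ≤ (ε₁+ε₂)*(1-ε₁-ε₂)*(s+μ₂) + (2*(ε₁+ε₂)-1)*(ε₁*μ₁+ε₂*μ₂) := by
      have hd : 0 ≤ (ε₁+ε₂)*(1-ε₁-ε₂)*(s-μ₂) :=
        mul_nonneg (mul_nonneg (by linarith) (by linarith)) (by linarith)
      linarith [hbr, hd]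
    have hprod : 0 ≤ (s - μ₂) * ((ε₁+ε₂)*(1-ε₁-ε₂)*(s+μ₂) + (2*(ε₁+ε₂)-1)*(ε₁*μ₁+ε₂*μ₂)) :=
      mul_nonneg (by linarith) hbr2
    have h4 : 0 ≤ 4*((s - μ₂) * ((ε₁+ε₂)*(1-ε₁-ε₂)*(s+μ₂) + (2*(ε₁+ε₂)-1)*(ε₁*μ₁+ε₂*μ₂))) :=
      mul_nonneg (by norm_num) hprod
    linarith [key, h4]
  -- global minimality of c
  have hFc : F c = q₁ c := hFmid c (le_of_lt hc1) hc2
  have hglobal : ∀ s, F c ≤ F s := by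
    intro s
    rw [hFc]
    rcases le_total s μ₁ with h | h
    · rw [hFlow s h]
      have := P1 μ₁ le_rfl (le_of_lt h12)
      linarith [hq₁μ₁]
    · rcases le_total s μ₂ with h2 | h2
      · rw [hFmid s h h2]; exact P1 s h h2
      · rcases le_total s μ₃ with h3 | h3
        · rw [hFright s h2 h3]
          calc q₁ c ≤ q₁ μ₂ := P1 μ₂ (le_of_lt h12) le_rfl
          _ = q₂ μ₂ := hq₁₂μ₂
          _ ≤ q₂ s := P4 s h2
        · rw [hFhigh s h3]
          have := P1 μ₁ le_rfl (le_of_lt h12)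
          linarith [hq₁μ₁]
  refine ⟨?_, (hleast c hglobal).trans hc2⟩
  by_contra hlt
  push_neg at hlt
  have h1 : F sstar = 1 := hFlow sstar (le_of_lt hlt)
  have h2 : F sstar ≤ F c := hmin c
  rw [hFc, h1] at h2
  linarith

set_option maxHeartbeats 1000000 in
/-- Let `X` be a standardized 3-Dirac mixture with ordered locations
`μ₁ < μ₂ < μ₃` and probabilities `ε₁, ε₂, ε₃ > 0` summing to `1`, let `s⋆` be the smallest
minimizer of `s ↦ Var |X - s|`, and set `α₂ = ε₁μ₁ + ε₂μ₂`, `η₂ = ε₁ + ε₂`,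
`s₂ = (α₂/2)(1/η₂ - 1/(1 - η₂))`. Then `s⋆ ∈ [μ₁, μ₂]` and `s₂ < μ₂` hold if and only if
`μ₁ < -((2ε₂ + 4ε₁ε₃)/√(4ε₁ε₃(ε₂ + 4ε₁ε₃))) √(ε₃/(1-ε₃))`. -/
theorem stmt_18 (ε₁ ε₂ ε₃ μ₁ μ₂ μ₃ : ℝ)
    (hε₁ : 0 < ε₁) (hε₂ : 0 < ε₂) (hε₃ : 0 < ε₃) (hsum : ε₁ + ε₂ + ε₃ = 1)
    (h12 : μ₁ < μ₂) (h23 : μ₂ < μ₃)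
    (P : Measure ℝ)
    (hP : P = ENNReal.ofReal ε₁ • Measure.dirac μ₁ + ENNReal.ofReal ε₂ • Measure.dirac μ₂ +
      ENNReal.ofReal ε₃ • Measure.dirac μ₃)
    (hmean : ∫ x, x ∂P = 0) (hm2 : ∫ x, x ^ 2 ∂P = 1)
    (sstar : ℝ)
    (hmin : ∀ s : ℝ, variance (fun x => |x - sstar|) P ≤ variance (fun x => |x - s|) P)
    (hleast : ∀ t : ℝ,
      (∀ s : ℝ, variance (fun x => |x - t|) P ≤ variance (fun x => |x - s|) P) → sstar ≤ t)
    (α₂ η₂ s₂ : ℝ)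
    (hα₂ : α₂ = ε₁ * μ₁ + ε₂ * μ₂) (hη₂ : η₂ = ε₁ + ε₂)
    (hs₂ : s₂ = α₂ / 2 * (1 / η₂ - 1 / (1 - η₂))) :
    (sstar ∈ Set.Icc μ₁ μ₂ ∧ s₂ < μ₂) ↔
      μ₁ < -((2 * ε₂ + 4 * ε₁ * ε₃) / Real.sqrt (4 * ε₁ * ε₃ * (ε₂ + 4 * ε₁ * ε₃))) *
        Real.sqrt (ε₃ / (1 - ε₃)) := by
  subst hP
  have m0 : ε₁*μ₁ + ε₂*μ₂ + ε₃*μ₃ = 0 :=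
    (int_dirac3 ε₁ ε₂ ε₃ μ₁ μ₂ μ₃ hε₁.le hε₂.le hε₃.le (fun x => x)).symm.trans hmean
  have m1 : ε₁*μ₁^2 + ε₂*μ₂^2 + ε₃*μ₃^2 = 1 :=
    (int_dirac3 ε₁ ε₂ ε₃ μ₁ μ₂ μ₃ hε₁.le hε₂.le hε₃.le (fun x => x^2)).symm.trans hm2
  have hμ₁neg : μ₁ < 0 := by
    nlinarith [mul_pos hε₂ (sub_pos.2 h12), mul_pos hε₃ (sub_pos.2 (h12.trans h23)), m0]
  have hstepA := stepA ε₁ ε₂ ε₃ μ₁ μ₂ μ₃ hε₁ hε₂ hε₃ hsum h12 h23 m0 m1 hμ₁neg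
    α₂ η₂ s₂ hα₂ hη₂ hs₂
  constructor
  · rintro ⟨_, hs2lt⟩
    exact hstepA.1 hs2lt
  · intro h
    have hs2lt : s₂ < μ₂ := hstepA.2 h
    refine ⟨?_, hs2lt⟩
    -- convert s₂ < μ₂ to cleared form
    have hA : 0 < ε₁ + ε₂ := by linarith
    have hs₂' : s₂ = (α₂ * (ε₃ - (ε₁+ε₂))) / (2 * (ε₁+ε₂) * ε₃) := by
      rw [hs₂, hη₂, show (1:ℝ) - (ε₁+ε₂) = ε₃ by linarith]
      have h1 : (ε₁+ε₂) ≠ 0 := ne_of_gt hA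
      have h2 : ε₃ ≠ 0 := ne_of_gt hε₃
      field_simp
    rw [hs₂'] at hs2lt
    have hC : (ε₁*μ₁ + ε₂*μ₂) * (ε₃ - (ε₁+ε₂)) < μ₂ * (2 * (ε₁+ε₂) * ε₃) := by
      have := (div_lt_iff₀ (by positivity : (0:ℝ) < 2 * (ε₁+ε₂) * ε₃)).1 hs2lt
      rwa [hα₂] at this
    set F : ℝ → ℝ := fun s => (ε₁*(μ₁-s)^2 + ε₂*(μ₂-s)^2 + ε₃*(μ₃-s)^2)
      - (ε₁*|μ₁-s| + ε₂*|μ₂-s| + ε₃*|μ₃-s|)^2 with hFdef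
    have hvar : ∀ s : ℝ, variance (fun x => |x - s|)
        (ENNReal.ofReal ε₁ • Measure.dirac μ₁ + ENNReal.ofReal ε₂ • Measure.dirac μ₂ +
          ENNReal.ofReal ε₃ • Measure.dirac μ₃) = F s :=
      fun s => var_formula ε₁ ε₂ ε₃ μ₁ μ₂ μ₃ hε₁.le hε₂.le hε₃.le hsum s
    have hmin' : ∀ s, F sstar ≤ F s := by
      intro s
      have := hmin s
      rwa [hvar sstar, hvar s] at this
    have hleast' : ∀ t, (∀ s, F t ≤ F s) → sstar ≤ t := by
      intro t ht
      refine hleast t ?_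
      intro s
      rw [hvar t, hvar s]
      exact ht s
    have := stepB ε₁ ε₂ ε₃ μ₁ μ₂ μ₃ sstar hε₁ hε₂ hε₃ hsum h12 h23 m0 m1 hμ₁neg
      F (fun s => rfl) hmin' hleast' hC
    exact Set.mem_Icc.2 this
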